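/- If model C is ergodic with unique invariant measure δ_{∘^ℤ} (i.e., νF_C^n converges weakly to δ_{∘^ℤ} for every probability measure ν on {∘,•}^ℤ), then model B is ergodic with unique invariant measure δ_{∘^ℤ} (i.e., νF_B^n converges weakly to δ_{∘^ℤ} for every probability measure ν on {∘,•}^ℤ). (Part of Lemma 4.3.) -/

import Mathlib

open MeasureTheory ProbabilityTheory Filter

/-!
Conventions: a configuration of models B/C is `y : ℤ → Bool` (`false` = ∘ empty,
`true` = • particle); an update is `u : ℤ → Bool` (`true` = ↑, `false` = →).
The space `ℤ → Bool` carries the product topology (with `Bool` discrete) and the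
product (Borel) σ-algebra; weak convergence is tested on bounded continuous functions.
-/

/-- The local map `ℬ` of model B: the `i`-th coordinate of `ℬ(y,u)` is `•` iff
`(y_{i-1}y_i, u_{i-1}u_i) ∈ {(•∘, →⋅), (∘•, ⋅↑), (••, ↑↑), (••, →→)}`. -/
def modelB (y u : ℤ → Bool) : ℤ → Bool := fun i =>
  match y (i - 1), y i with
  | true, false => !u (i - 1)
  | false, true => u i
  | true, true => u (i - 1) == u i
  | false, false => false

/-- The local map `𝒞` of model C: the `i`-th coordinate of `𝒞(z,u)` is `•` iff
`(z_{i-1}z_i, u_{i-1}u_i) ∈ {(•∘, →⋅), (∘•, ⋅↑), (••, ↑↑), (••, →⋅)}`. -/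
def modelC (z u : ℤ → Bool) : ℤ → Bool := fun i =>
  match z (i - 1), z i with
  | true, false => !u (i - 1)
  | false, true => u i
  | true, true => !u (i - 1) || u i
  | false, false => false

/-- `lam` is the product over `ℤ` of the uniform measure on the two-element update
alphabet `𝒰`. -/
def IsUniformProduct (lam : Measure (ℤ → Bool)) : Prop :=
  IsProbabilityMeasure lam ∧
    ∀ (s : Finset ℤ) (f : ℤ → Bool),
      lam {u | ∀ i ∈ s, u i = f i} = (1 / 2 : ENNReal) ^ s.card

/-- `ν F_B`: the pushforward of `ν ⊗ lam` under `ℬ`. -/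
noncomputable def FB (lam ν : Measure (ℤ → Bool)) : Measure (ℤ → Bool) :=
  Measure.map (fun p : (ℤ → Bool) × (ℤ → Bool) => modelB p.1 p.2) (ν.prod lam)

/-- `ν F_C`: the pushforward of `ν ⊗ lam` under `𝒞`. -/
noncomputable def FC (lam ν : Measure (ℤ → Bool)) : Measure (ℤ → Bool) :=
  Measure.map (fun p : (ℤ → Bool) × (ℤ → Bool) => modelC p.1 p.2) (ν.prod lam)

/-- The empty configuration `∘^ℤ`. -/
def emptyConfig : ℤ → Bool := fun _ => false

lemma measurable_modelB : Measurable (fun p : (ℤ→Bool)×(ℤ→Bool) => modelB p.1 p.2) := by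
  rw [measurable_pi_iff]
  intro i
  have : (fun p : (ℤ→Bool)×(ℤ→Bool) => modelB p.1 p.2 i)
      = (fun q : (Bool×Bool)×(Bool×Bool) =>
          match q.1.1, q.1.2 with
          | true, false => !q.2.1
          | false, true => q.2.2
          | true, true => q.2.1 == q.2.2
          | false, false => false) ∘
        (fun p : (ℤ→Bool)×(ℤ→Bool) => ((p.1 (i-1), p.1 i), (p.2 (i-1), p.2 i))) := rfl
  rw [this]
  exact (measurable_of_countable _).comp (by fun_prop)

lemma measurable_modelC : Measurable (fun p : (ℤ→Bool)×(ℤ→Bool) => modelC p.1 p.2) := by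
  rw [measurable_pi_iff]
  intro i
  have : (fun p : (ℤ→Bool)×(ℤ→Bool) => modelC p.1 p.2 i)
      = (fun q : (Bool×Bool)×(Bool×Bool) =>
          match q.1.1, q.1.2 with
          | true, false => !q.2.1
          | false, true => q.2.2
          | true, true => !q.2.1 || q.2.2
          | false, false => false) ∘
        (fun p : (ℤ→Bool)×(ℤ→Bool) => ((p.1 (i-1), p.1 i), (p.2 (i-1), p.2 i))) := rfl
  rw [this]
  exact (measurable_of_countable _).comp (by fun_prop)

lemma modelB_le_modelC (y z u : ℤ → Bool) (h : ∀ i, y i ≤ z i) (i : ℤ) :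
    modelB y u i ≤ modelC z u i := by
  have h1 := h (i-1); have h2 := h i
  simp only [modelB, modelC]
  cases hy1 : y (i-1) <;> cases hy2 : y i <;> cases hz1 : z (i-1) <;> cases hz2 : z i <;>
    simp_all <;> cases u (i-1) <;> cases u i <;> simp_all


noncomputable def coupleMap (p : ((ℤ→Bool)×(ℤ→Bool))×(ℤ→Bool)) : (ℤ→Bool)×(ℤ→Bool) :=
  (modelB p.1.1 p.2, modelC p.1.2 p.2)

lemma measurable_coupleMap : Measurable coupleMap := by
  apply Measurable.prodMk
  · exact measurable_modelB.comp ((measurable_fst.comp measurable_fst).prodMk measurable_snd)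
  · exact measurable_modelC.comp ((measurable_snd.comp measurable_fst).prodMk measurable_snd)

noncomputable def FG (lam : Measure (ℤ→Bool)) (μ : Measure ((ℤ→Bool)×(ℤ→Bool))) :
    Measure ((ℤ→Bool)×(ℤ→Bool)) :=
  Measure.map coupleMap (μ.prod lam)

def goodSet : Set ((ℤ→Bool)×(ℤ→Bool)) := {p | ∀ i, p.1 i ≤ p.2 i}

lemma measurableSet_goodSet : MeasurableSet goodSet := by
  have : goodSet = ⋂ i : ℤ, {p : (ℤ→Bool)×(ℤ→Bool) | p.1 i ≤ p.2 i} := by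
    ext p; simp [goodSet]
  rw [this]
  refine MeasurableSet.iInter fun i => ?_
  have : {p : (ℤ→Bool)×(ℤ→Bool) | p.1 i ≤ p.2 i}
      = (fun p : (ℤ→Bool)×(ℤ→Bool) => (p.1 i, p.2 i)) ⁻¹' {q : Bool×Bool | q.1 ≤ q.2} := rfl
  rw [this]
  exact ((Set.to_countable _).measurableSet).preimage (by fun_prop)

def Ei (i : ℤ) : Set (ℤ → Bool) := {x | x i = true}

lemma measurableSet_Ei (i : ℤ) : MeasurableSet (Ei i) := by
  have : Ei i = (fun x : ℤ → Bool => x i) ⁻¹' {true} := rfl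
  rw [this]
  exact (measurable_pi_apply i) (measurableSet_singleton true)

section
lemma prob_FB (lam μ : Measure (ℤ→Bool)) [IsProbabilityMeasure lam] [IsProbabilityMeasure μ] :
    IsProbabilityMeasure (FB lam μ) :=
  Measure.isProbabilityMeasure_map measurable_modelB.aemeasurable

lemma prob_FC (lam μ : Measure (ℤ→Bool)) [IsProbabilityMeasure lam] [IsProbabilityMeasure μ] :
    IsProbabilityMeasure (FC lam μ) :=
  Measure.isProbabilityMeasure_map measurable_modelC.aemeasurable

variable (lam ν : Measure (ℤ → Bool)) [IsProbabilityMeasure lam] [IsProbabilityMeasure ν]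

lemma prob_iterate_FB : ∀ n, IsProbabilityMeasure ((FB lam)^[n] ν) := by
  intro n
  induction n with
  | zero => simp only [Function.iterate_zero, id]; infer_instance
  | succ n ih => rw [Function.iterate_succ_apply']; haveI := ih; exact prob_FB lam _

lemma prob_iterate_FC : ∀ n, IsProbabilityMeasure ((FC lam)^[n] ν) := by
  intro n
  induction n with
  | zero => simp only [Function.iterate_zero, id]; infer_instance
  | succ n ih => rw [Function.iterate_succ_apply']; haveI := ih; exact prob_FC lam _

lemma coupling_key : ∀ n,
    Measure.map Prod.fst ((FG lam)^[n] (Measure.map (fun x => (x,x)) ν)) = (FB lam)^[n] ν ∧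
    Measure.map Prod.snd ((FG lam)^[n] (Measure.map (fun x => (x,x)) ν)) = (FC lam)^[n] ν ∧
    IsProbabilityMeasure ((FG lam)^[n] (Measure.map (fun x => (x,x)) ν)) ∧
    ((FG lam)^[n] (Measure.map (fun x => (x,x)) ν)) goodSetᶜ = 0 := by
  have hdiag : Measurable (fun x : ℤ→Bool => (x,x)) := measurable_id.prodMk measurable_id
  intro n
  induction n with
  | zero =>
    refine ⟨?_, ?_, ?_, ?_⟩
    · simp only [Function.iterate_zero, id]
      rw [Measure.map_map measurable_fst hdiag]
      have : (Prod.fst ∘ fun x : ℤ → Bool => (x, x)) = id := rfl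
      rw [this, Measure.map_id]
    · simp only [Function.iterate_zero, id]
      rw [Measure.map_map measurable_snd hdiag]
      have : (Prod.snd ∘ fun x : ℤ → Bool => (x, x)) = id := rfl
      rw [this, Measure.map_id]
    · simpa using Measure.isProbabilityMeasure_map hdiag.aemeasurable
    · simp only [Function.iterate_zero, id]
      rw [Measure.map_apply hdiag measurableSet_goodSet.compl]
      have : (fun x : ℤ → Bool => (x, x)) ⁻¹' goodSetᶜ = ∅ := by
        ext x; simp [goodSet]
      rw [this]; exact measure_empty
  | succ n ih =>
    obtain ⟨ih1, ih2, ih3, ih4⟩ := ih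
    set μ := (FG lam)^[n] (Measure.map (fun x => (x,x)) ν) with hμ
    haveI := ih3
    rw [Function.iterate_succ_apply']
    refine ⟨?_, ?_, ?_, ?_⟩
    · rw [FG, Measure.map_map measurable_fst measurable_coupleMap]
      have : (Prod.fst ∘ coupleMap)
          = (fun p : (ℤ→Bool)×(ℤ→Bool) => modelB p.1 p.2) ∘ (Prod.map Prod.fst id) := rfl
      rw [this, ← Measure.map_map measurable_modelB (measurable_fst.prodMap measurable_id),
        ← Measure.map_prod_map _ _ measurable_fst measurable_id, Measure.map_id, ih1,
        Function.iterate_succ_apply']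
      rfl
    · rw [FG, Measure.map_map measurable_snd measurable_coupleMap]
      have : (Prod.snd ∘ coupleMap)
          = (fun p : (ℤ→Bool)×(ℤ→Bool) => modelC p.1 p.2) ∘ (Prod.map Prod.snd id) := rfl
      rw [this, ← Measure.map_map measurable_modelC (measurable_snd.prodMap measurable_id),
        ← Measure.map_prod_map _ _ measurable_snd measurable_id, Measure.map_id, ih2,
        Function.iterate_succ_apply']
      rfl
    · exact Measure.isProbabilityMeasure_map measurable_coupleMap.aemeasurable
    · rw [FG, Measure.map_apply measurable_coupleMap measurableSet_goodSet.compl]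
      have hsub : coupleMap ⁻¹' goodSetᶜ ⊆ goodSetᶜ ×ˢ Set.univ := by
        intro p hp
        refine ⟨fun hg => hp ?_, trivial⟩
        exact fun i => modelB_le_modelC _ _ _ hg i
      refine le_antisymm ?_ (zero_le)
      calc (μ.prod lam) (coupleMap ⁻¹' goodSetᶜ) ≤ (μ.prod lam) (goodSetᶜ ×ˢ Set.univ) :=
            measure_mono hsub
        _ = μ goodSetᶜ * lam Set.univ := Measure.prod_prod _ _
        _ = 0 := by rw [ih4, zero_mul]

lemma FB_le_FC_Ei (n : ℕ) (i : ℤ) :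
    ((FB lam)^[n] ν) (Ei i) ≤ ((FC lam)^[n] ν) (Ei i) := by
  obtain ⟨h1, h2, h3, h4⟩ := coupling_key lam ν n
  set μ := (FG lam)^[n] (Measure.map (fun x => (x,x)) ν) with hμ
  rw [← h1, ← h2, Measure.map_apply measurable_fst (measurableSet_Ei i),
    Measure.map_apply measurable_snd (measurableSet_Ei i)]
  have hsub : Prod.fst ⁻¹' (Ei i) ⊆ (Prod.snd ⁻¹' (Ei i)) ∪ goodSetᶜ := by
    intro p hp
    by_cases hg : p ∈ goodSet
    · left
      have := hg i
      simp only [Ei, Set.mem_preimage, Set.mem_setOf_eq] at hp ⊢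
      rw [hp] at this
      cases h2 : p.2 i
      · rw [h2] at this; exact absurd this (by decide)
      · rfl
    · right; exact hg
  calc μ (Prod.fst ⁻¹' (Ei i)) ≤ μ ((Prod.snd ⁻¹' (Ei i)) ∪ goodSetᶜ) := measure_mono hsub
    _ ≤ μ (Prod.snd ⁻¹' (Ei i)) + μ goodSetᶜ := measure_union_le _ _
    _ = μ (Prod.snd ⁻¹' (Ei i)) := by rw [h4, add_zero]

/-- The indicator of `{x | x i = true}` as a bounded continuous function. -/
noncomputable def indBCF (i : ℤ) : BoundedContinuousFunction (ℤ → Bool) ℝ :=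
  BoundedContinuousFunction.mkOfCompact
    ⟨fun x => if x i then 1 else 0, by
      have : (fun x : ℤ → Bool => if x i then (1:ℝ) else 0)
          = (fun b : Bool => if b then (1:ℝ) else 0) ∘ (fun x : ℤ → Bool => x i) := rfl
      rw [this]
      exact Continuous.comp (continuous_of_discreteTopology) (continuous_apply i)⟩

lemma indBCF_apply (i : ℤ) (x : ℤ → Bool) : indBCF i x = if x i then 1 else 0 := rfl

lemma indBCF_eq_indicator (i : ℤ) :
    (fun x => indBCF i x) = Set.indicator (Ei i) (fun _ => (1:ℝ)) := by
  funext x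
  rw [indBCF_apply]
  by_cases h : x i = true
  · rw [if_pos h, Set.indicator_of_mem (show x ∈ Ei i from h)]
  · rw [if_neg h, Set.indicator_of_notMem (show x ∉ Ei i from h)]

lemma integral_indBCF (i : ℤ) (μ : Measure (ℤ → Bool)) :
    ∫ x, indBCF i x ∂μ = (μ (Ei i)).toReal := by
  rw [show (fun x => indBCF i x) = Set.indicator (Ei i) (fun _ => (1:ℝ)) from
    indBCF_eq_indicator i]
  rw [MeasureTheory.integral_indicator_const (1:ℝ) (measurableSet_Ei i)]
  simp
  rfl

lemma indBCF_empty (i : ℤ) : indBCF i emptyConfig = 0 := by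
  rw [indBCF_apply]; simp [emptyConfig]

/-- cylinder neighborhoods form a basis at emptyConfig -/
lemma exists_cylinder_subset {U : Set (ℤ → Bool)} (hU : U ∈ nhds emptyConfig) :
    ∃ S : Finset ℤ, {x : ℤ → Bool | ∀ i ∈ S, x i = false} ⊆ U := by
  rw [nhds_pi, Filter.mem_pi] at hU
  obtain ⟨I, hIfin, t, ht, hsub⟩ := hU
  refine ⟨hIfin.toFinset, fun x hx => hsub ?_⟩
  intro i hi
  have hfalse : (false : Bool) ∈ t i := mem_of_mem_nhds (ht i)
  have : x i = false := hx i (hIfin.mem_toFinset.mpr hi)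
  rw [this]
  exact hfalse

/-- part of Lemma 4.3: if model C is ergodic with unique invariant
measure `δ_{∘^ℤ}` (i.e. `ν F_C^n` converges weakly to `δ_{∘^ℤ}` for every probability
measure `ν`), then so is model B. -/
theorem modelC_ergodic_implies_modelB_ergodic (lam : Measure (ℤ → Bool))
    (hlam : IsUniformProduct lam)
    (hC : ∀ ν : Measure (ℤ → Bool), IsProbabilityMeasure ν →
      ∀ f : BoundedContinuousFunction (ℤ → Bool) ℝ,
        Tendsto (fun n : ℕ => ∫ x, f x ∂((FC lam)^[n] ν)) atTop
          (nhds (∫ x, f x ∂(Measure.dirac emptyConfig)))) :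
    ∀ ν : Measure (ℤ → Bool), IsProbabilityMeasure ν →
      ∀ f : BoundedContinuousFunction (ℤ → Bool) ℝ,
        Tendsto (fun n : ℕ => ∫ x, f x ∂((FB lam)^[n] ν)) atTop
          (nhds (∫ x, f x ∂(Measure.dirac emptyConfig))) := by
  haveI : IsProbabilityMeasure lam := hlam.1
  intro ν hν f
  haveI := hν
  -- Step 1: coordinate events under model C tend to 0
  have hCi : ∀ i : ℤ, Tendsto (fun n => ((FC lam)^[n] ν) (Ei i)) atTop (nhds 0) := by
    intro i
    have h0 : (∫ x, indBCF i x ∂(Measure.dirac emptyConfig)) = 0 := by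
      rw [integral_indBCF i]
      rw [Measure.dirac_apply' _ (measurableSet_Ei i)]
      have : emptyConfig ∉ Ei i := by simp [Ei, emptyConfig]
      rw [Set.indicator_of_notMem this]
      simp
    have hreal : Tendsto (fun n => (((FC lam)^[n] ν) (Ei i)).toReal) atTop (nhds 0) := by
      have := hC ν hν (indBCF i)
      rw [h0] at this
      simpa only [integral_indBCF] using this
    have hne : ∀ n : ℕ, ((FC lam)^[n] ν) (Ei i) ≠ ⊤ := by
      intro n
      haveI := prob_iterate_FC lam ν n
      exact measure_ne_top _ _
    have := ENNReal.tendsto_ofReal hreal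
    rw [ENNReal.ofReal_zero] at this
    refine this.congr fun n => ?_
    exact ENNReal.ofReal_toReal (hne n)
  -- Step 2: coordinate events under model B tend to 0
  have hBi : ∀ i : ℤ, Tendsto (fun n => ((FB lam)^[n] ν) (Ei i)) atTop (nhds 0) := by
    intro i
    exact tendsto_of_tendsto_of_tendsto_of_le_of_le tendsto_const_nhds (hCi i)
      (fun n => zero_le) (fun n => FB_le_FC_Ei lam ν n i)
  -- Step 3: weak convergence via portmanteau
  set μn := fun n => (FB lam)^[n] ν with hμn
  haveI : ∀ n, IsProbabilityMeasure (μn n) := prob_iterate_FB lam ν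
  let P : ℕ → ProbabilityMeasure (ℤ → Bool) := fun n => ⟨μn n, prob_iterate_FB lam ν n⟩
  let Q : ProbabilityMeasure (ℤ → Bool) := ⟨Measure.dirac emptyConfig, inferInstance⟩
  suffices h : Tendsto P atTop (nhds Q) by
    exact ProbabilityMeasure.tendsto_iff_forall_integral_tendsto.mp h f
  apply tendsto_of_forall_isOpen_le_liminf
  intro G hG
  by_cases hmem : emptyConfig ∈ G
  · obtain ⟨S, hS⟩ := exists_cylinder_subset (hG.mem_nhds hmem)
    set cyl : Set (ℤ → Bool) := {x | ∀ i ∈ S, x i = false} with hcyl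
    have hcylm : MeasurableSet cyl := by
      have : cyl = ⋂ i ∈ S, {x : ℤ → Bool | x i = false} := by
        ext x; simp [hcyl]
      rw [this]
      refine MeasurableSet.biInter (S : Set ℤ).to_countable fun i _ => ?_
      have : {x : ℤ → Bool | x i = false} = (fun x : ℤ → Bool => x i) ⁻¹' {false} := rfl
      rw [this]
      exact (measurable_pi_apply i) (measurableSet_singleton false)
    have hsub2 : cylᶜ ⊆ ⋃ i ∈ S, Ei i := by
      intro x hx
      simp only [hcyl, Set.mem_compl_iff, Set.mem_setOf_eq, not_forall] at hx
      obtain ⟨i, hi, hxi⟩ := hx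
      refine Set.mem_biUnion hi ?_
      simp only [Ei, Set.mem_setOf_eq]
      cases h' : x i
      · exact absurd h' hxi
      · rfl
    have h1 : Tendsto (fun n => μn n cylᶜ) atTop (nhds 0) := by
      have hsum : Tendsto (fun n => ∑ i ∈ S, μn n (Ei i)) atTop (nhds 0) := by
        have := tendsto_finset_sum S (fun i _ => hBi i)
        simpa using this
      refine tendsto_of_tendsto_of_tendsto_of_le_of_le tendsto_const_nhds hsum
        (fun n => zero_le) (fun n => ?_)
      calc μn n cylᶜ ≤ μn n (⋃ i ∈ S, Ei i) := measure_mono hsub2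
        _ ≤ ∑ i ∈ S, μn n (Ei i) := measure_biUnion_finset_le S _
    have h2 : Tendsto (fun n => μn n cyl) atTop (nhds 1) := by
      have heq : ∀ n, μn n cyl = 1 - μn n cylᶜ := by
        intro n
        have := prob_compl_eq_one_sub (μ := μn n) hcylm.compl
        rw [compl_compl] at this
        exact this
      have : Tendsto (fun n => (1:ENNReal) - μn n cylᶜ) atTop (nhds (1 - 0)) :=
        ENNReal.Tendsto.sub tendsto_const_nhds h1 (Or.inl (by simp))
      rw [tsub_zero] at this
      exact this.congr fun n => (heq n).symm
    have hv : Tendsto (fun n => (μn n cyl).toNNReal) atTop (nhds 1) := by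
      have := (ENNReal.tendsto_toNNReal (by simp : (1:ENNReal) ≠ ⊤)).comp h2
      simpa [Function.comp_def] using this
    have hle : ∀ n, (μn n cyl).toNNReal ≤ P n G := by
      intro n
      have hmono : μn n cyl ≤ μn n G := measure_mono hS
      exact ENNReal.toNNReal_mono (measure_ne_top _ _) hmono
    refine le_trans (Q.apply_le_one G) ?_
    calc (1:NNReal) = liminf (fun n => (μn n cyl).toNNReal) atTop := hv.liminf_eq.symm
      _ ≤ liminf (fun n => P n G) atTop := by
          refine liminf_le_liminf (Eventually.of_forall hle) ?_ ?_
          · exact isBoundedUnder_of ⟨0, fun n => zero_le⟩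
          · exact IsBoundedUnder.isCoboundedUnder_ge
              (isBoundedUnder_of ⟨1, fun n => (P n).apply_le_one G⟩)
  · have hQ : Q G = 0 := by
      have : (Measure.dirac emptyConfig) G = 0 := by
        rw [Measure.dirac_apply' _ hG.measurableSet]
        exact Set.indicator_of_notMem hmem _
      simp only [Q, ProbabilityMeasure.coeFn_def, ProbabilityMeasure.coe_mk, this]
      show ((Measure.dirac emptyConfig) G).toNNReal = 0
      rw [this, ENNReal.toNNReal_zero]
    rw [hQ]
    exact zero_le
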